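/- Prediction-error bound for optimal allocation fractions: let n ∈ ℕ, let N_1,…,N_n ≥ 0 and N̂_1,…,N̂_n ≥ 0 and s, ŝ ≥ 0 be real numbers. Define the prefix allocations L_i = min{ N_i, (s − Σ_{j<i} N_j)_+ } and L̂_i = min{ N̂_i, (ŝ − Σ_{j<i} N̂_j)_+ }, where (x)_+ = max{x,0}. Assume L_i > 0 for some i and L̂_i > 0 for some i; set i* = max{ i : L_i > 0 } and î* = max{ i : L̂_i > 0 }, and define ζ = L_{i*}/N_{i*} (taking ζ = 1 if N_{i*} = 0) and ζ̂ = L̂_{î*}/N̂_{î*} (taking ζ̂ = 1 if N̂_{î*} = 0). Define γ_i = 1 for i < i*, γ_{i*} = ζ, γ_i = 0 for i > i*, and γ̂_i = 1 for i < î*, γ̂_{î*} = ζ̂, γ̂_i = 0 for i > î*. Then Σ_{i=1}^n N_i·|γ_i − γ̂_i| ≤ |s − ŝ| + 3·Σ_{i=1}^n |N_i − N̂_i|. -/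

import Mathlib

open Finset

private lemma step_min (a s P : ℝ) (ha : 0 ≤ a) (hs : 0 ≤ s) :
    min a (max (s - P) 0) + min s P = min s (a + P) := by
  rcases le_total s P with h | h
  · rw [max_eq_right (by linarith), min_eq_right ha, min_eq_left h,
      min_eq_left (by linarith)]
    ring
  · rw [max_eq_left (by linarith), min_eq_right h]
    rcases le_total a (s - P) with h2 | h2
    · rw [min_eq_left h2, min_eq_right (by linarith)]
    · rw [min_eq_right h2, min_eq_left (by linarith)]
      ring

private lemma greedy_total (n : ℕ) (N : Fin n → ℝ) (hN : ∀ i, 0 ≤ N i)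
    (s : ℝ) (hs : 0 ≤ s) (L : Fin n → ℝ)
    (hL : ∀ i, L i = min (N i) (max (s - ∑ j ∈ Iio i, N j) 0)) :
    ∑ i, L i = min s (∑ i, N i) := by
  have key : ∀ m : ℕ, m ≤ n →
      ∑ i ∈ univ.filter (fun i : Fin n => (i : ℕ) < m), L i
        = min s (∑ i ∈ univ.filter (fun i : Fin n => (i : ℕ) < m), N i) := by
    intro m
    induction m with
    | zero =>
      intro _
      simp [min_eq_right hs]
    | succ m ih =>
      intro hm
      have hmn : m < n := hm
      set i : Fin n := ⟨m, hmn⟩ with hi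
      have hset : univ.filter (fun j : Fin n => (j : ℕ) < m + 1)
          = insert i (univ.filter (fun j : Fin n => (j : ℕ) < m)) := by
        ext j
        simp only [mem_filter, mem_univ, true_and, mem_insert, Nat.lt_succ_iff_lt_or_eq]
        constructor
        · rintro (h | h)
          · exact Or.inr h
          · exact Or.inl (Fin.ext h)
        · rintro (h | h)
          · exact Or.inr (by rw [h])
          · exact Or.inl h
      have hIio : (Iio i : Finset (Fin n)) = univ.filter (fun j : Fin n => (j : ℕ) < m) := by
        ext j; rw [mem_Iio, mem_filter]; exact ⟨fun h => ⟨mem_univ _, h⟩, fun h => h.2⟩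
      have hnm : i ∉ univ.filter (fun j : Fin n => (j : ℕ) < m) := by simp [hi]
      rw [hset, Finset.sum_insert hnm, Finset.sum_insert hnm, ih (le_of_lt hmn),
        hL i, ← hIio]
      exact step_min (N i) s _ (hN i) hs
  have h := key n le_rfl
  have huniv : univ.filter (fun i : Fin n => (i : ℕ) < n) = univ :=
    filter_true_of_mem (fun i _ => i.is_lt)
  rwa [huniv] at h

private lemma alloc_sum (n : ℕ) (N : Fin n → ℝ) (hN : ∀ i, 0 ≤ N i)
    (s : ℝ) (hs : 0 ≤ s) (L : Fin n → ℝ)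
    (hL : ∀ i, L i = min (N i) (max (s - ∑ j ∈ Iio i, N j) 0))
    (istar : Fin n) (histar : 0 < L istar) (histar' : ∀ j, 0 < L j → j ≤ istar)
    (ζ : ℝ) (hζ : ζ = if N istar = 0 then 1 else L istar / N istar)
    (γ : Fin n → ℝ)
    (hγ : ∀ i, γ i = if i < istar then 1 else if i = istar then ζ else 0) :
    ∑ i, N i * γ i = min s (∑ i, N i) := by
  have hLle : L istar ≤ N istar := by rw [hL]; exact min_le_left _ _
  have hNpos : 0 < N istar := lt_of_lt_of_le histar hLle
  have hPs : ∑ j ∈ Iio istar, N j < s := by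
    have h1 : 0 < max (s - ∑ j ∈ Iio istar, N j) 0 :=
      lt_of_lt_of_le histar (by rw [hL]; exact min_le_right _ _)
    by_contra h
    push_neg at h
    rw [max_eq_right (by linarith)] at h1
    exact lt_irrefl _ h1
  have hterm : ∀ i, N i * γ i = L i := by
    intro i
    rcases lt_trichotomy i istar with h | h | h
    · rw [hγ i, if_pos h, mul_one, hL i]
      have hsub : insert i (Iio i) ⊆ Iio istar := by
        intro j hj
        rcases mem_insert.mp hj with h' | h'
        · subst h'; exact mem_Iio.mpr h
        · exact mem_Iio.mpr (lt_trans (mem_Iio.mp h') h)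
      have hsum : N i + ∑ j ∈ Iio i, N j ≤ ∑ j ∈ Iio istar, N j := by
        have h2 := Finset.sum_le_sum_of_subset_of_nonneg hsub
          (fun j _ _ => hN j)
        rwa [Finset.sum_insert (by simp)] at h2
      have : N i ≤ max (s - ∑ j ∈ Iio i, N j) 0 :=
        le_max_of_le_left (by linarith)
      exact (min_eq_left this).symm
    · rw [hγ i, if_neg (by simp [h]), if_pos h, h, hζ, if_neg (ne_of_gt hNpos)]
      field_simp
    · have hL0 : L i = 0 := by
        have hge : 0 ≤ L i := by
          rw [hL]; exact le_min (hN i) (le_max_right _ _)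
        rcases eq_or_lt_of_le hge with h' | h'
        · exact h'.symm
        · exact absurd (histar' i h') (not_le_of_gt h)
      rw [hγ i, if_neg (by exact not_lt_of_gt h), if_neg (ne_of_gt h), mul_zero, hL0]
  rw [Finset.sum_congr rfl (fun i _ => hterm i)]
  exact greedy_total n N hN s hs L hL

/-- **Prediction-error bound for optimal allocation fractions.** Let `L`, `L̂` be
the greedy prefix allocations for `(s, N)` and `(ŝ, N̂)`, let `i*`, `î*` be the
largest indices with positive allocation, `ζ = L_{i*}/N_{i*}` (and `ζ = 1` if
`N_{i*} = 0`), similarly `ζ̂`, and let `γ`, `γ̂` be the corresponding fraction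
vectors (ones before the pivot, the pivotal value at the pivot, zeros after).
Then `Σ_i N_i·|γ_i − γ̂_i| ≤ |s − ŝ| + 3·Σ_i |N_i − N̂_i|`. -/
theorem prediction_error_bound_for_fractions (n : ℕ)
    (N Nhat : Fin n → ℝ) (hN : ∀ i, 0 ≤ N i) (hNhat : ∀ i, 0 ≤ Nhat i)
    (s shat : ℝ) (hs : 0 ≤ s) (hshat : 0 ≤ shat)
    (L Lhat : Fin n → ℝ)
    (hL : ∀ i, L i = min (N i) (max (s - ∑ j ∈ Iio i, N j) 0))
    (hLhat : ∀ i, Lhat i = min (Nhat i) (max (shat - ∑ j ∈ Iio i, Nhat j) 0))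
    (istar ihat : Fin n)
    (histar : 0 < L istar) (histar' : ∀ j, 0 < L j → j ≤ istar)
    (hihat : 0 < Lhat ihat) (hihat' : ∀ j, 0 < Lhat j → j ≤ ihat)
    (ζ ζhat : ℝ)
    (hζ : ζ = if N istar = 0 then 1 else L istar / N istar)
    (hζhat : ζhat = if Nhat ihat = 0 then 1 else Lhat ihat / Nhat ihat)
    (γ γhat : Fin n → ℝ)
    (hγ : ∀ i, γ i = if i < istar then 1 else if i = istar then ζ else 0)
    (hγhat : ∀ i, γhat i = if i < ihat then 1 else if i = ihat then ζhat else 0) :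
    ∑ i, N i * |γ i - γhat i| ≤ |s - shat| + 3 * ∑ i, |N i - Nhat i| := by
  -- basic positivity facts
  have hNpos : 0 < N istar := lt_of_lt_of_le histar (by rw [hL]; exact min_le_left _ _)
  have hNhatpos : 0 < Nhat ihat :=
    lt_of_lt_of_le hihat (by rw [hLhat]; exact min_le_left _ _)
  have hζ0 : 0 ≤ ζ := by
    rw [hζ, if_neg (ne_of_gt hNpos)]
    exact div_nonneg (le_of_lt histar) (le_of_lt hNpos)
  have hζ1 : ζ ≤ 1 := by
    rw [hζ, if_neg (ne_of_gt hNpos)]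
    exact div_le_one_of_le₀ (by rw [hL]; exact min_le_left _ _) (le_of_lt hNpos)
  have hζhat0 : 0 ≤ ζhat := by
    rw [hζhat, if_neg (ne_of_gt hNhatpos)]
    exact div_nonneg (le_of_lt hihat) (le_of_lt hNhatpos)
  have hζhat1 : ζhat ≤ 1 := by
    rw [hζhat, if_neg (ne_of_gt hNhatpos)]
    exact div_le_one_of_le₀ (by rw [hLhat]; exact min_le_left _ _) (le_of_lt hNhatpos)
  have hγ01 : ∀ i, 0 ≤ γ i ∧ γ i ≤ 1 := by
    intro i; rw [hγ i]; split_ifs <;> constructor <;> first | assumption | norm_num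
  have hγhat01 : ∀ i, 0 ≤ γhat i ∧ γhat i ≤ 1 := by
    intro i; rw [hγhat i]; split_ifs <;> constructor <;> first | assumption | norm_num
  -- pointwise comparability
  have hcomp : (∀ i, γ i ≤ γhat i) ∨ (∀ i, γhat i ≤ γ i) := by
    rcases lt_trichotomy istar ihat with h | h | h
    · left
      intro i
      rw [hγ i, hγhat i]
      by_cases hi : i < ihat
      · rw [if_pos hi]; split_ifs <;> first | assumption | norm_num
      · have hii : ihat ≤ i := not_lt.mp hi
        have h1 : ¬ i < istar := not_lt.mpr (le_of_lt (lt_of_lt_of_le h hii))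
        have h2 : i ≠ istar := ne_of_gt (lt_of_lt_of_le h hii)
        rw [if_neg h1, if_neg h2, if_neg hi]
        split_ifs <;> first | assumption | norm_num
    · rcases le_total ζ ζhat with hz | hz
      · left
        intro i
        rw [hγ i, hγhat i, h]
        split_ifs <;> first | assumption | norm_num
      · right
        intro i
        rw [hγ i, hγhat i, h]
        split_ifs <;> first | assumption | norm_num
    · right
      intro i
      rw [hγ i, hγhat i]
      by_cases hi : i < istar
      · rw [if_pos hi]; split_ifs <;> first | assumption | norm_num
      · have hii : istar ≤ i := not_lt.mp hi
        have h1 : ¬ i < ihat := not_lt.mpr (le_of_lt (lt_of_lt_of_le h hii))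
        have h2 : i ≠ ihat := ne_of_gt (lt_of_lt_of_le h hii)
        rw [if_neg hi, if_neg h1, if_neg h2]
        split_ifs <;> first | assumption | norm_num
  -- the two allocation sums
  have hA : ∑ i, N i * γ i = min s (∑ i, N i) :=
    alloc_sum n N hN s hs L hL istar histar histar' ζ hζ γ hγ
  have hC : ∑ i, Nhat i * γhat i = min shat (∑ i, Nhat i) :=
    alloc_sum n Nhat hNhat shat hshat Lhat hLhat ihat hihat hihat' ζhat hζhat γhat hγhat
  set A := ∑ i, N i * γ i with hAdef
  set B := ∑ i, N i * γhat i with hBdef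
  set C := ∑ i, Nhat i * γhat i with hCdef
  set D := ∑ i, |N i - Nhat i| with hDdef
  have hD0 : 0 ≤ D := Finset.sum_nonneg (fun i _ => abs_nonneg _)
  -- step 1 : LHS ≤ |A - B|
  have hstep1 : ∑ i, N i * |γ i - γhat i| ≤ |A - B| := by
    rcases hcomp with hc | hc
    · have heq : ∑ i, N i * |γ i - γhat i| = B - A := by
        rw [hBdef, hAdef, ← Finset.sum_sub_distrib]
        refine Finset.sum_congr rfl (fun i _ => ?_)
        rw [abs_of_nonpos (by linarith [hc i])]
        ring
      rw [heq, abs_sub_comm]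
      exact le_abs_self _
    · have heq : ∑ i, N i * |γ i - γhat i| = A - B := by
        rw [hAdef, hBdef, ← Finset.sum_sub_distrib]
        refine Finset.sum_congr rfl (fun i _ => ?_)
        rw [abs_of_nonneg (by linarith [hc i])]
        ring
      rw [heq]
      exact le_abs_self _
  -- step 2 : |C - B| ≤ D
  have hstep2 : |C - B| ≤ D := by
    have h1 : C - B = ∑ i, (Nhat i - N i) * γhat i := by
      rw [hCdef, hBdef, ← Finset.sum_sub_distrib]
      exact Finset.sum_congr rfl (fun i _ => by ring)
    rw [h1]
    calc |∑ i, (Nhat i - N i) * γhat i| ≤ ∑ i, |(Nhat i - N i) * γhat i| :=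
          Finset.abs_sum_le_sum_abs _ _
      _ ≤ D := by
          refine Finset.sum_le_sum (fun i _ => ?_)
          rw [abs_mul, abs_sub_comm]
          calc |N i - Nhat i| * |γhat i| ≤ |N i - Nhat i| * 1 := by
                have := (hγhat01 i).1
                have := (hγhat01 i).2
                have : |γhat i| ≤ 1 := by rw [abs_of_nonneg (hγhat01 i).1]; exact (hγhat01 i).2
                exact mul_le_mul_of_nonneg_left this (abs_nonneg _)
            _ = |N i - Nhat i| := mul_one _
  -- step 3 : |A - C| ≤ |s - shat| + D
  have hstep3 : |A - C| ≤ |s - shat| + D := by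
    rw [hA, hC]
    have h1 := abs_min_sub_min_le_max s (∑ i, N i) shat (∑ i, Nhat i)
    have h2 : |∑ i, N i - ∑ i, Nhat i| ≤ D := by
      rw [← Finset.sum_sub_distrib]
      exact Finset.abs_sum_le_sum_abs _ _
    calc |min s (∑ i, N i) - min shat (∑ i, Nhat i)|
        ≤ max |s - shat| |∑ i, N i - ∑ i, Nhat i| := h1
      _ ≤ |s - shat| + D := max_le (by linarith) (by linarith [abs_nonneg (s - shat)])
  -- combine
  have : |A - B| ≤ |A - C| + |C - B| := by
    calc |A - B| = |(A - C) + (C - B)| := by ring_nf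
      _ ≤ |A - C| + |C - B| := abs_add_le _ _
  linarith
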